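/- Let A = {r < |z| < R} with 0 < r < R < ∞. Suppose h : A → ℂ is locally in W^{1,1}, has nonnegative Jacobian almost everywhere, and satisfies h_z · conj(h_z̄) = c/z² a.e. for a real constant c. Writing h_N for the radial derivative and h_T for the (normalized) angular derivative of h in polar coordinates, one has a.e.: |h_N|² − |h_T|² = 4c/|z|², Re( conj(h_N) · h_T ) = 0, and J(z,h) = |h_N| · |h_T|. Consequently |h_N|² ≤ J(z,h) a.e. if c ≤ 0, and |h_T|² ≤ J(z,h) a.e. if c ≥ 0. -/

import Mathlib

open Complex MeasureTheory Real Filter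
open scoped Classical Topology

/-- Wirtinger derivative ∂f/∂z. -/
noncomputable def wdz (f : ℂ → ℂ) (z : ℂ) : ℂ :=
  (fderiv ℝ f z 1 - Complex.I * fderiv ℝ f z Complex.I) / 2

/-- Wirtinger derivative ∂f/∂z̄. -/
noncomputable def wdzbar (f : ℂ → ℂ) (z : ℂ) : ℂ :=
  (fderiv ℝ f z 1 + Complex.I * fderiv ℝ f z Complex.I) / 2

/-- Jacobian determinant J(z,f) = |f_z|² − |f_z̄|². -/
noncomputable def jac (f : ℂ → ℂ) (z : ℂ) : ℝ :=
  ‖wdz f z‖ ^ 2 - ‖wdzbar f z‖ ^ 2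

/-- Normal (radial) derivative of f at z: derivative in direction z/|z|. -/
noncomputable def dN (f : ℂ → ℂ) (z : ℂ) : ℂ :=
  fderiv ℝ f z (z / (‖z‖ : ℂ))

/-- Tangential (normalized angular) derivative of f at z: derivative in direction i z/|z|. -/
noncomputable def dT (f : ℂ → ℂ) (z : ℂ) : ℂ :=
  fderiv ℝ f z (Complex.I * z / (‖z‖ : ℂ))

lemma fderiv_eq_wdz' (h : ℂ → ℂ) (z w : ℂ) :
    fderiv ℝ h z w = wdz h z * w + wdzbar h z * (starRingEnd ℂ) w := by
  set L := fderiv ℝ h z with hL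
  have key : ∀ a b : ℝ, L ((a:ℂ) + (b:ℂ) * Complex.I) =
      (L 1 - Complex.I * L Complex.I) / 2 * ((a:ℂ) + (b:ℂ) * Complex.I) +
      (L 1 + Complex.I * L Complex.I) / 2 * ((a:ℂ) - (b:ℂ) * Complex.I) := by
    intro a b
    have h1 : ((a:ℂ) + (b:ℂ) * Complex.I) = a • (1:ℂ) + b • Complex.I := by
      simp [Complex.real_smul]
    conv_lhs => rw [h1]
    rw [map_add, ContinuousLinearMap.map_smul, ContinuousLinearMap.map_smul, Complex.real_smul, Complex.real_smul]
    linear_combination ((b:ℂ) * L Complex.I) * Complex.I_sq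
  have hcw : (starRingEnd ℂ) w = (w.re:ℂ) - (w.im:ℂ) * Complex.I := by
    apply Complex.ext <;> simp
  show L w = _
  rw [wdz, wdzbar, ← hL]
  calc L w = L ((w.re:ℂ) + (w.im:ℂ) * Complex.I) := by rw [Complex.re_add_im]
    _ = _ := by rw [key w.re w.im, Complex.re_add_im, hcw]

/-- Polar-coordinate consequences of the Hopf-Laplace equation h_z conj(h_z̄) = c/z². -/
theorem stmt5 (r R c : ℝ) (hr : 0 < r) (hrR : r < R)
    (A : Set ℂ) (hA : A = {z : ℂ | r < ‖z‖ ∧ ‖z‖ < R})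
    (h : ℂ → ℂ)
    (hreg : ∀ᵐ z ∂(volume.restrict A), DifferentiableAt ℝ h z)
    (hJ : ∀ᵐ z ∂(volume.restrict A), 0 ≤ jac h z)
    (hHopf : ∀ᵐ z ∂(volume.restrict A),
      wdz h z * (starRingEnd ℂ) (wdzbar h z) = (c : ℂ) / z ^ 2) :
    ∀ᵐ z ∂(volume.restrict A),
      ‖dN h z‖ ^ 2 - ‖dT h z‖ ^ 2 = 4 * c / (‖z‖) ^ 2 ∧
      ((starRingEnd ℂ) (dN h z) * dT h z).re = 0 ∧
      jac h z = ‖dN h z‖ * ‖dT h z‖ ∧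
      (c ≤ 0 → ‖dN h z‖ ^ 2 ≤ jac h z) ∧
      (0 ≤ c → ‖dT h z‖ ^ 2 ≤ jac h z) := by
  have hAm : MeasurableSet A := by
    have : IsOpen A := by
      rw [hA]
      exact (isOpen_lt continuous_const continuous_norm).inter
        (isOpen_lt continuous_norm continuous_const)
    exact this.measurableSet
  have hmem : ∀ᵐ z ∂(volume.restrict A), z ∈ A := ae_restrict_mem hAm
  filter_upwards [hJ, hHopf, hmem] with z hjac hhopf hz
  have hz0 : z ≠ 0 := by
    rw [hA] at hz
    have h1z : r < ‖z‖ := hz.1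
    intro h0
    rw [h0] at h1z
    simp at h1z
    linarith
  have habs : (0 : ℝ) < ‖z‖ := norm_pos_iff.mpr hz0
  set p := wdz h z with hp_def
  set q := wdzbar h z with hq_def
  set u : ℂ := z / (‖z‖ : ℂ) with hu_def
  set cp := (starRingEnd ℂ) p with hcp_def
  set cq := (starRingEnd ℂ) q with hcq_def
  set cu := (starRingEnd ℂ) u with hcu_def
  have huabs : ‖u‖ = 1 := by
    rw [hu_def, norm_div, Complex.norm_of_nonneg (norm_nonneg z), div_self habs.ne']
  have huu : u * cu = 1 := by
    rw [hcu_def, Complex.mul_conj, Complex.normSq_eq_norm_sq, huabs]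
    norm_num
  have hN : dN h z = p * u + q * cu := fderiv_eq_wdz' h z u
  have hT : dT h z = Complex.I * (p * u - q * cu) := by
    have h1 : Complex.I * z / (‖z‖ : ℂ) = Complex.I * u := by
      rw [hu_def]; ring
    have h2 := fderiv_eq_wdz' h z (Complex.I * u)
    rw [dT, h1, h2, map_mul, Complex.conj_I, ← hcu_def]
    ring
  set np := Complex.normSq p with hnp_def
  set nq := Complex.normSq q with hnq_def
  set t : ℝ := c / (‖z‖) ^ 2 with ht_def
  have hpq : p * cq = (c : ℂ) / z ^ 2 := hhopf
  have hz2 : (z : ℂ) ^ 2 ≠ 0 := pow_ne_zero _ hz0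
  have habs2 : ((‖z‖ : ℂ)) ≠ 0 := by
    simpa using habs.ne'
  have hK : p * cq * u ^ 2 = (t : ℂ) := by
    rw [hpq, hu_def, ht_def]
    push_cast
    field_simp
  have hK' : cp * q * cu ^ 2 = (t : ℂ) := by
    have := congrArg (starRingEnd ℂ) hK
    simpa [hcp_def, hcq_def, hcu_def, map_mul, map_pow, Complex.conj_conj,
      Complex.conj_ofReal, mul_comm, mul_assoc, mul_left_comm] using this
  have hp : p * cp = (np : ℂ) := by rw [hcp_def, Complex.mul_conj, hnp_def]
  have hq : q * cq = (nq : ℂ) := by rw [hcq_def, Complex.mul_conj, hnq_def]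
  -- norm of dN
  have c1 : dN h z * (starRingEnd ℂ) (dN h z) = ((np + nq + 2 * t : ℝ) : ℂ) := by
    rw [hN]
    simp only [map_add, map_mul, ← hcp_def, ← hcq_def, ← hcu_def]
    rw [hcu_def, Complex.conj_conj, ← hcu_def]
    push_cast
    linear_combination (u * cu) * hp + (np : ℂ) * huu + (u * cu) * hq +
      (nq : ℂ) * huu + hK + hK'
  have e1 : ‖dN h z‖ ^ 2 = np + nq + 2 * t := by
    have h2 := c1
    rw [Complex.mul_conj] at h2
    have h3 : Complex.normSq (dN h z) = np + nq + 2 * t := by exact_mod_cast h2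
    rw [Complex.sq_norm, h3]
  -- norm of dT
  have c2 : dT h z * (starRingEnd ℂ) (dT h z) = ((np + nq - 2 * t : ℝ) : ℂ) := by
    rw [hT]
    simp only [map_mul, map_sub, Complex.conj_I, ← hcp_def, ← hcq_def, ← hcu_def]
    rw [hcu_def, Complex.conj_conj, ← hcu_def]
    push_cast
    linear_combination (-(p * u - q * cu) * (cp * cu - cq * u)) * Complex.I_sq +
      (u * cu) * hp + (np : ℂ) * huu + (u * cu) * hq + (nq : ℂ) * huu - hK - hK'
  have e2 : ‖dT h z‖ ^ 2 = np + nq - 2 * t := by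
    have h2 := c2
    rw [Complex.mul_conj] at h2
    have h3 : Complex.normSq (dT h z) = np + nq - 2 * t := by exact_mod_cast h2
    rw [Complex.sq_norm, h3]
  -- cross term
  have c3 : (starRingEnd ℂ) (dN h z) * dT h z = Complex.I * ((np - nq : ℝ) : ℂ) := by
    rw [hN, hT]
    simp only [map_add, map_mul, ← hcp_def, ← hcq_def, ← hcu_def]
    rw [hcu_def, Complex.conj_conj, ← hcu_def]
    push_cast
    linear_combination Complex.I * ((u * cu) * hp + (np : ℂ) * huu - (u * cu) * hq -
      (nq : ℂ) * huu + hK - hK')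
  have e3 : ((starRingEnd ℂ) (dN h z) * dT h z).re = 0 := by
    rw [c3]
    simp
  -- jacobian
  have ejac : jac h z = np - nq := by
    rw [jac, ← hp_def, ← hq_def, hnp_def, hnq_def,
      Complex.sq_norm, Complex.sq_norm]
  have e4 : np * nq = t ^ 2 := by
    have h1 : Complex.normSq (p * cq) = Complex.normSq ((c : ℂ) / z ^ 2) := by
      rw [hpq]
    rw [map_mul, hcq_def, Complex.normSq_conj, ← hnp_def, ← hnq_def] at h1
    rw [h1, ht_def]
    rw [map_div₀, map_pow, Complex.normSq_ofReal, Complex.normSq_eq_norm_sq]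
    field_simp
  have hsq : (jac h z) ^ 2 = (‖dN h z‖ * ‖dT h z‖) ^ 2 := by
    rw [ejac, mul_pow, e1, e2]
    linear_combination (-4 : ℝ) * e4
  have hprod : 0 ≤ ‖dN h z‖ * ‖dT h z‖ := mul_nonneg (norm_nonneg _) (norm_nonneg _)
  have e5 : jac h z = ‖dN h z‖ * ‖dT h z‖ := by
    calc jac h z = Real.sqrt ((jac h z) ^ 2) := (Real.sqrt_sq hjac).symm
      _ = Real.sqrt ((‖dN h z‖ * ‖dT h z‖) ^ 2) := by rw [hsq]
      _ = ‖dN h z‖ * ‖dT h z‖ := Real.sqrt_sq hprod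
  refine ⟨?_, e3, e5, ?_, ?_⟩
  · rw [e1, e2, ht_def]; ring
  · intro hc
    have ht_le : t ≤ 0 := div_nonpos_of_nonpos_of_nonneg hc (sq_nonneg _)
    have h2 : ‖dN h z‖ ^ 2 ≤ ‖dT h z‖ ^ 2 := by rw [e1, e2]; linarith
    have hab : ‖dN h z‖ ≤ ‖dT h z‖ := by
      calc ‖dN h z‖ = Real.sqrt (‖dN h z‖ ^ 2) := (Real.sqrt_sq (norm_nonneg _)).symm
        _ ≤ Real.sqrt (‖dT h z‖ ^ 2) := Real.sqrt_le_sqrt h2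
        _ = ‖dT h z‖ := Real.sqrt_sq (norm_nonneg _)
    rw [e5]
    nlinarith [norm_nonneg (dN h z)]
  · intro hc
    have ht_ge : 0 ≤ t := div_nonneg hc (by positivity)
    have h2 : ‖dT h z‖ ^ 2 ≤ ‖dN h z‖ ^ 2 := by rw [e1, e2]; linarith
    have hab : ‖dT h z‖ ≤ ‖dN h z‖ := by
      calc ‖dT h z‖ = Real.sqrt (‖dT h z‖ ^ 2) := (Real.sqrt_sq (norm_nonneg _)).symm
        _ ≤ Real.sqrt (‖dN h z‖ ^ 2) := Real.sqrt_le_sqrt h2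
        _ = ‖dN h z‖ := Real.sqrt_sq (norm_nonneg _)
    rw [e5]
    nlinarith [norm_nonneg (dT h z)]
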